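/- arXiv:1901.03573 — 5 statements merged into one kernel-verified Lean document; each statement's English description precedes it below -/
import Mathlib

section
/- Let H̃ : ℝ^d × ℝ^d → ℝ be a polarised energy and ∇̄H̃ : ℝ^d × ℝ^d × ℝ^d → ℝ^d a polarised discrete gradient, i.e., H̃(y,z) - H̃(x,y) = (1/2)(z-x)ᵀ ∇̄H̃(x,y,z) for all x,y,z. Then for any skew-symmetric S and Δt > 0, the two-step scheme (x^{n+2} - x^n)/(2Δt) = S ∇̄H̃(x^n, x^{n+1}, x^{n+2}) preserves the polarised invariant: H̃(x^n, x^{n+1}) = H̃(x^0, x^1) for all n ≥ 0. -/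
open Matrix

/-- The two-step polarised discrete gradient scheme preserves the polarised invariant. -/
theorem stmt_2 {d : ℕ} (S : Matrix (Fin d) (Fin d) ℝ) (hS : Sᵀ = -S)
    (Δt : ℝ) (hΔt : 0 < Δt)
    (H : (Fin d → ℝ) → ℝ)
    (Htil : (Fin d → ℝ) → (Fin d → ℝ) → ℝ)
    (hpol₁ : ∀ x : Fin d → ℝ, Htil x x = H x)
    (hpol₂ : ∀ x y : Fin d → ℝ, Htil x y = Htil y x)
    (PDG : (Fin d → ℝ) → (Fin d → ℝ) → (Fin d → ℝ) → (Fin d → ℝ))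
    (hPDG : ∀ x y z : Fin d → ℝ,
      Htil y z - Htil x y = (1 / 2 : ℝ) * ((z - x) ⬝ᵥ PDG x y z))
    (x : ℕ → (Fin d → ℝ))
    (hscheme : ∀ n : ℕ,
      x (n + 2) - x n = (2 * Δt) • S.mulVec (PDG (x n) (x (n + 1)) (x (n + 2)))) :
    ∀ n : ℕ, Htil (x n) (x (n + 1)) = Htil (x 0) (x 1) := by
  have key : ∀ g : Fin d → ℝ, (S *ᵥ g) ⬝ᵥ g = 0 := by
    intro g
    have h1 : g ⬝ᵥ (S *ᵥ g) = (g ᵥ* S) ⬝ᵥ g := dotProduct_mulVec g S g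
    have h2 : g ᵥ* S = Sᵀ *ᵥ g := (mulVec_transpose S g).symm
    rw [hS, Matrix.neg_mulVec] at h2
    rw [h2, neg_dotProduct] at h1
    have h3 := dotProduct_comm g (S *ᵥ g)
    linarith [h1, h3]
  intro n
  induction n with
  | zero => rfl
  | succ n ih =>
    have step := hPDG (x n) (x (n + 1)) (x (n + 2))
    rw [hscheme n, smul_dotProduct, key] at step
    have : Htil (x (n + 1)) (x (n + 2)) = Htil (x n) (x (n + 1)) := by
      have : Htil (x (n + 1)) (x (n + 2)) - Htil (x n) (x (n + 1)) = 0 := by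
        rw [step]; simp
      linarith
    rw [show n + 1 + 1 = n + 2 from rfl, this, ih]
end

section
/- Let H be a homogeneous cubic polynomial on ℝ^d, S skew-symmetric, f(x) = S∇H(x), and Δt > 0. Suppose the sequence (x^n) satisfies Kahan's method (x^{n+1}-x^n)/Δt = -½f(x^n) + 2f((x^n+x^{n+1})/2) - ½f(x^{n+1}) for all n. Then it satisfies the two-step scheme (x^{n+2} - x^n)/(2Δt) = (1/4) S H''(x^{n+1})(x^n + x^{n+2}) for all n. -/
open Matrix

/-- A sequence generated by Kahan's method for ẋ = S∇H(x), H homogeneous cubic,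
satisfies the two-step scheme (x^{n+2}-x^n)/(2Δt) = ¼ S H''(x^{n+1})(x^n + x^{n+2}). -/
theorem stmt_9 {d : ℕ} (S : Matrix (Fin d) (Fin d) ℝ) (hS : Sᵀ = -S)
    (Δt : ℝ) (hΔt : 0 < Δt)
    (Hess : (Fin d → ℝ) → Matrix (Fin d) (Fin d) ℝ)
    (hlin : IsLinearMap ℝ Hess)
    (hsymm : ∀ x y : Fin d → ℝ, (Hess x).mulVec y = (Hess y).mulVec x)
    (gradH : (Fin d → ℝ) → (Fin d → ℝ))
    (hgrad : ∀ x : Fin d → ℝ, gradH x = (1 / 2 : ℝ) • (Hess x).mulVec x)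
    (f : (Fin d → ℝ) → (Fin d → ℝ))
    (hf : ∀ x : Fin d → ℝ, f x = S.mulVec (gradH x))
    (x : ℕ → (Fin d → ℝ))
    (hkahan : ∀ n : ℕ, x (n + 1) - x n =
      Δt • (-((1 / 2 : ℝ) • f (x n))
        + (2 : ℝ) • f ((1 / 2 : ℝ) • (x n + x (n + 1)))
        - (1 / 2 : ℝ) • f (x (n + 1)))) :
    ∀ n : ℕ, x (n + 2) - x n =
      (2 * Δt) • ((1 / 4 : ℝ) •
        S.mulVec ((Hess (x (n + 1))).mulVec (x n + x (n + 2)))) := by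
  have key : ∀ n : ℕ, x (n + 1) - x n =
      (Δt / 2) • S.mulVec ((Hess (x n)).mulVec (x (n + 1))) := by
    intro n
    rw [hkahan n]
    simp only [hf, hgrad, hlin.map_add, hlin.map_smul, Matrix.add_mulVec,
      Matrix.smul_mulVec, Matrix.mulVec_add, Matrix.mulVec_smul,
      hsymm (x n) (x (n + 1)), smul_add, smul_neg, smul_sub, smul_smul]
    module
  intro n
  have h1 := key n
  have h2 := key (n + 1)
  have hx : x (n + 2) - x n = (x (n + 2) - x (n + 1)) + (x (n + 1) - x n) := by
    abel
  rw [hx]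
  have h2' : x (n + 1 + 1) = x (n + 2) := by norm_num
  rw [h2'] at h2
  rw [h1, h2, hsymm (x n) (x (n + 1)), Matrix.mulVec_add, Matrix.mulVec_add]
  module
end

section
/- Let H be a homogeneous cubic polynomial on ℝ^d, S skew-symmetric, Δt > 0. Suppose x^1 is obtained from x^0 by Kahan's method, and the sequence satisfies the two-step scheme (x^{n+2}-x^n)/(2Δt) = (1/4) S H''(x^{n+1})(x^n + x^{n+2}) for all n ≥ 0. Then x^{n+1} is obtained from x^n by Kahan's method for every n ≥ 0. -/
open Matrix

/-- Key algebraic identity: the Kahan right-hand side simplifies. -/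
lemma kahan_key {d : ℕ} (S : Matrix (Fin d) (Fin d) ℝ)
    (Hess : (Fin d → ℝ) → Matrix (Fin d) (Fin d) ℝ)
    (hlin : IsLinearMap ℝ Hess)
    (hsymm : ∀ x y : Fin d → ℝ, (Hess x).mulVec y = (Hess y).mulVec x)
    (gradH : (Fin d → ℝ) → (Fin d → ℝ))
    (hgrad : ∀ x : Fin d → ℝ, gradH x = (1 / 2 : ℝ) • (Hess x).mulVec x)
    (f : (Fin d → ℝ) → (Fin d → ℝ))
    (hf : ∀ x : Fin d → ℝ, f x = S.mulVec (gradH x))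
    (Δt : ℝ) (a b : Fin d → ℝ) :
    Δt • (-((1 / 2 : ℝ) • f a)
        + (2 : ℝ) • f ((1 / 2 : ℝ) • (a + b))
        - (1 / 2 : ℝ) • f b)
      = (Δt / 2) • S.mulVec ((Hess a).mulVec b) := by
  simp only [hf, hgrad]
  have h1 : Hess ((1/2:ℝ) • (a + b)) = (1/2:ℝ) • (Hess a + Hess b) := by
    rw [hlin.map_smul, hlin.map_add]
  rw [h1]
  have hba := hsymm b a
  simp only [Matrix.add_mulVec, Matrix.mulVec_add, Matrix.mulVec_smul,
    Matrix.smul_mulVec, smul_add, hba]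
  module

/-- If x¹ is obtained from x⁰ by Kahan's method and the sequence satisfies the
two-step scheme (x^{n+2}-x^n)/(2Δt) = ¼ S H''(x^{n+1})(x^n + x^{n+2}), then every
step is a step of Kahan's method. -/
theorem stmt_10 {d : ℕ} (S : Matrix (Fin d) (Fin d) ℝ) (hS : Sᵀ = -S)
    (Δt : ℝ) (hΔt : 0 < Δt)
    (Hess : (Fin d → ℝ) → Matrix (Fin d) (Fin d) ℝ)
    (hlin : IsLinearMap ℝ Hess)
    (hsymm : ∀ x y : Fin d → ℝ, (Hess x).mulVec y = (Hess y).mulVec x)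
    (gradH : (Fin d → ℝ) → (Fin d → ℝ))
    (hgrad : ∀ x : Fin d → ℝ, gradH x = (1 / 2 : ℝ) • (Hess x).mulVec x)
    (f : (Fin d → ℝ) → (Fin d → ℝ))
    (hf : ∀ x : Fin d → ℝ, f x = S.mulVec (gradH x))
    (x : ℕ → (Fin d → ℝ))
    (hfirst : x 1 - x 0 =
      Δt • (-((1 / 2 : ℝ) • f (x 0))
        + (2 : ℝ) • f ((1 / 2 : ℝ) • (x 0 + x 1))
        - (1 / 2 : ℝ) • f (x 1)))
    (hscheme : ∀ n : ℕ, x (n + 2) - x n =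
      (2 * Δt) • ((1 / 4 : ℝ) •
        S.mulVec ((Hess (x (n + 1))).mulVec (x n + x (n + 2))))) :
    ∀ n : ℕ, x (n + 1) - x n =
      Δt • (-((1 / 2 : ℝ) • f (x n))
        + (2 : ℝ) • f ((1 / 2 : ℝ) • (x n + x (n + 1)))
        - (1 / 2 : ℝ) • f (x (n + 1))) := by
  have key := kahan_key S Hess hlin hsymm gradH hgrad f hf Δt
  -- reduce to the simplified form
  have main : ∀ n : ℕ, x (n + 1) - x n
      = (Δt / 2) • S.mulVec ((Hess (x n)).mulVec (x (n + 1))) := by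
    intro n
    induction n with
    | zero => rw [← key]; exact hfirst
    | succ n ih =>
      have hs := hscheme n
      have hsym2 : (Hess (x (n + 1))).mulVec (x n) = (Hess (x n)).mulVec (x (n + 1)) :=
        hsymm _ _
      have : x (n + 2) - x (n + 1) = (x (n + 2) - x n) - (x (n + 1) - x n) := by abel
      rw [this, hs, ih]
      simp only [Matrix.mulVec_add, hsym2, smul_add]
      module
  intro n
  rw [key, main n]
end

section
/- Consequently, for H homogeneous cubic and S skew-symmetric, the PDG scheme (x^{n+2}-x^n)/(2Δt) = S∇̄H̃(x^n,x^{n+1},x^{n+2}) with H̃(x,y) = (1/6)xᵀH''((x+y)/2)y and ∇̄H̃(x,y,z) = 2∇_x H̃((x+z)/2,y) is exactly the scheme (x^{n+2}-x^n)/(2Δt) = (1/6) S H''(x^{n+1})(x^n + x^{n+1} + x^{n+2}). -/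
open Matrix

/-- The PDG scheme with H̃(x,y) = (1/6)xᵀH''((x+y)/2)y and
∇̄H̃(x,y,z) = 2∇ₓH̃((x+z)/2,y) is exactly the scheme
(x^{n+2}-x^n)/(2Δt) = (1/6) S H''(x^{n+1})(x^n + x^{n+1} + x^{n+2}). -/
theorem stmt_15 {d : ℕ} (S : Matrix (Fin d) (Fin d) ℝ) (hS : Sᵀ = -S)
    (Δt : ℝ) (hΔt : 0 < Δt)
    (Hess : (Fin d → ℝ) → Matrix (Fin d) (Fin d) ℝ)
    (hlin : IsLinearMap ℝ Hess)
    (hsm : ∀ m : Fin d → ℝ, (Hess m).IsSymm)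
    (hsymm : ∀ x y : Fin d → ℝ, (Hess x).mulVec y = (Hess y).mulVec x)
    (gradx : (Fin d → ℝ) → (Fin d → ℝ) → (Fin d → ℝ))
    (hgradx : ∀ x y : Fin d → ℝ,
      gradx x y = (1 / 12 : ℝ) • (Hess ((2 : ℝ) • x + y)).mulVec y)
    (PDG : (Fin d → ℝ) → (Fin d → ℝ) → (Fin d → ℝ) → (Fin d → ℝ))
    (hPDG : ∀ x y z : Fin d → ℝ,
      PDG x y z = (2 : ℝ) • gradx ((1 / 2 : ℝ) • (x + z)) y)
    (x : ℕ → (Fin d → ℝ)) :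
    (∀ n : ℕ, x (n + 2) - x n =
        (2 * Δt) • S.mulVec (PDG (x n) (x (n + 1)) (x (n + 2)))) ↔
    (∀ n : ℕ, x (n + 2) - x n =
        (2 * Δt) • ((1 / 6 : ℝ) •
          S.mulVec ((Hess (x (n + 1))).mulVec (x n + x (n + 1) + x (n + 2))))) := by
  have key : ∀ a b c : Fin d → ℝ, PDG a b c =
      (1 / 6 : ℝ) • (Hess b).mulVec (a + b + c) := by
    intro a b c
    have h2 : (2 : ℝ) • ((1 / 2 : ℝ) • (a + c)) = a + c := by
      rw [smul_smul]; norm_num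
    have h3 : a + b + c = a + c + b := by abel
    rw [hPDG, hgradx, h2, smul_smul, hsymm, h3]
    norm_num
  refine forall_congr' fun n => ?_
  rw [key, Matrix.mulVec_smul]
end

section
/- The implicit midpoint rule (x^{n+1}-x^n)/Δt = f((x^n+x^{n+1})/2) applied over two consecutive steps to ẋ = S∇H(x) with H homogeneous cubic yields (x^{n+2}-x^n)/(2Δt) = S[ (1/16)H''(x^n)x^n + (1/8)H''(x^{n+1})(x^n + x^{n+1} + x^{n+2}) + (1/16)H''(x^{n+2})x^{n+2} ]. -/
open Matrix

/-- The implicit midpoint rule over two consecutive steps applied to ẋ = S∇H(x)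
with H homogeneous cubic yields
(x^{n+2}-x^n)/(2Δt) = S[(1/16)H''(x^n)x^n + (1/8)H''(x^{n+1})(x^n+x^{n+1}+x^{n+2})
+ (1/16)H''(x^{n+2})x^{n+2}]. -/
theorem stmt_19 {d : ℕ} (S : Matrix (Fin d) (Fin d) ℝ) (hS : Sᵀ = -S)
    (Δt : ℝ) (hΔt : 0 < Δt)
    (Hess : (Fin d → ℝ) → Matrix (Fin d) (Fin d) ℝ)
    (hlin : IsLinearMap ℝ Hess)
    (hsymm : ∀ x y : Fin d → ℝ, (Hess x).mulVec y = (Hess y).mulVec x)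
    (gradH : (Fin d → ℝ) → (Fin d → ℝ))
    (hgrad : ∀ x : Fin d → ℝ, gradH x = (1 / 2 : ℝ) • (Hess x).mulVec x)
    (f : (Fin d → ℝ) → (Fin d → ℝ))
    (hf : ∀ x : Fin d → ℝ, f x = S.mulVec (gradH x))
    (x : ℕ → (Fin d → ℝ))
    (hmid : ∀ n : ℕ, x (n + 1) - x n =
      Δt • f ((1 / 2 : ℝ) • (x n + x (n + 1)))) :
    ∀ n : ℕ, x (n + 2) - x n =
      (2 * Δt) • S.mulVec
        ((1 / 16 : ℝ) • (Hess (x n)).mulVec (x n)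
          + (1 / 8 : ℝ) • (Hess (x (n + 1))).mulVec (x n + x (n + 1) + x (n + 2))
          + (1 / 16 : ℝ) • (Hess (x (n + 2))).mulVec (x (n + 2))) := by
  intro n
  have h1 := hmid n
  have h2 := hmid (n + 1)
  simp only [hf, hgrad] at h1 h2
  have hAB : (Hess (x n)).mulVec (x (n + 1)) = (Hess (x (n + 1))).mulVec (x n) :=
    hsymm _ _
  have hBC : (Hess (x (n + 1))).mulVec (x (n + 1 + 1)) =
      (Hess (x (n + 1 + 1))).mulVec (x (n + 1)) := hsymm _ _
  have key : x (n + 2) - x n = (x (n + 1) - x n) + (x (n + 1 + 1) - x (n + 1)) := by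
    have : n + 1 + 1 = n + 2 := rfl
    rw [this]; abel
  rw [key, h1, h2]
  have : n + 1 + 1 = n + 2 := rfl
  rw [← this]
  simp only [hlin.map_add, hlin.map_smul, Matrix.add_mulVec, Matrix.smul_mulVec,
    Matrix.mulVec_add, Matrix.mulVec_smul, hAB, hBC, smul_add, smul_smul]
  module
end
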